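/- If non-negative integers n1 ≥ n2 ≥ 0 and a1 ≥ a2 ≥ a3 ≥ 0 with n1 > 100 satisfy B_{n1} + B_{n2} = 2^{a1} + 2^{a2} + 2^{a3}, then |α^{n2}·2^{−a1}·(1 + α^{n1−n2})/(4√2) − 1| < 2.2 · 2^{a2−a1}, where α = 3 + 2√2. -/

import Mathlib

/-- The balancing numbers: `B 0 = 0`, `B 1 = 1`, `B (n+2) = 6 * B (n+1) - B n`. -/
def balancing : ℕ → ℤ
  | 0 => 0
  | 1 => 1
  | n + 2 => 6 * balancing (n + 1) - balancing n

lemma binet (n : ℕ) :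
    (3 + 2 * Real.sqrt 2) ^ n - (3 - 2 * Real.sqrt 2) ^ n
      = 4 * Real.sqrt 2 * (balancing n : ℝ) := by
  have hs : Real.sqrt 2 ^ 2 = 2 := Real.sq_sqrt (by norm_num)
  induction n using Nat.twoStepInduction with
  | zero => simp [balancing]
  | one => simp [balancing]; ring
  | more n ih1 ih2 =>
    have hb : (balancing (n+2) : ℝ) = 6 * balancing (n+1) - balancing n := by
      rw [show balancing (n+2) = 6 * balancing (n+1) - balancing n from rfl]
      push_cast; ring
    have hα : (3 + 2*Real.sqrt 2)^(n+2)
        = 6*(3 + 2*Real.sqrt 2)^(n+1) - (3 + 2*Real.sqrt 2)^n := by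
      rw [pow_succ, pow_succ]; linear_combination (4*(3 + 2*Real.sqrt 2)^n) * hs
    have hβ : (3 - 2*Real.sqrt 2)^(n+2)
        = 6*(3 - 2*Real.sqrt 2)^(n+1) - (3 - 2*Real.sqrt 2)^n := by
      rw [pow_succ, pow_succ]; linear_combination (4*(3 - 2*Real.sqrt 2)^n) * hs
    rw [hα, hβ, hb]; linarith [ih1, ih2]

theorem balancing_linear_form_bound_case2 (n1 n2 a1 a2 a3 : ℕ)
    (hn : n2 ≤ n1) (ha12 : a2 ≤ a1) (ha23 : a3 ≤ a2) (hn1 : 100 < n1)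
    (heq : balancing n1 + balancing n2 = 2 ^ a1 + 2 ^ a2 + 2 ^ a3) :
    |(3 + 2 * Real.sqrt 2) ^ n2 * (2 : ℝ) ^ (-(a1 : ℤ)) *
        ((1 + (3 + 2 * Real.sqrt 2) ^ ((n1 : ℤ) - n2)) / (4 * Real.sqrt 2)) - 1| <
      2.2 * (2 : ℝ) ^ ((a2 : ℤ) - a1) := by
  obtain ⟨d, rfl⟩ : ∃ d, n1 = n2 + d := ⟨n1 - n2, by omega⟩
  have h1 := binet (n2 + d)
  have h2 := binet n2
  set s := Real.sqrt 2 with hsdef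
  have hs : s ^ 2 = 2 := Real.sq_sqrt (by norm_num)
  have hs1 : (1.414 : ℝ) ≤ s := by nlinarith [Real.sqrt_nonneg 2]
  have hs2 : s ≤ 1.415 := by nlinarith [Real.sqrt_nonneg 2]
  have hspos : (0:ℝ) < s := by linarith
  clear_value s
  set α : ℝ := 3 + 2 * s with hαdef
  set β : ℝ := 3 - 2 * s with hβdef
  clear_value α β
  have hβpos : (0:ℝ) < β := by rw [hβdef]; nlinarith
  have hβle : β ≤ 172/1000 := by rw [hβdef]; nlinarith
  have hβle1 : β ≤ 1 := by linarith
  -- rewrite zpow exponents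
  have hz2 : α ^ ((((n2+d):ℕ):ℤ) - (n2:ℤ)) = α ^ d := by
    rw [show (((n2+d):ℕ):ℤ) - (n2:ℤ) = (d:ℤ) by push_cast; ring, zpow_natCast]
  have hz1 : (2:ℝ) ^ (-(a1:ℤ)) = ((2:ℝ) ^ a1)⁻¹ := by
    rw [zpow_neg, zpow_natCast]
  have hz3 : (2:ℝ) ^ ((a2:ℤ) - (a1:ℤ)) = (2:ℝ)^a2 / (2:ℝ)^a1 := by
    rw [zpow_sub₀ (by norm_num : (2:ℝ) ≠ 0), zpow_natCast, zpow_natCast]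
  rw [hz1, hz2, hz3]
  -- Binet identities are h1, h2
  have key : α ^ n2 * (1 + α ^ d)
      = 4*s*(((balancing (n2+d) : ℤ):ℝ) + ((balancing n2 : ℤ):ℝ)) + (β^n2 + β^(n2+d)) := by
    have : α ^ n2 * (1 + α ^ d) = α^n2 + α^(n2+d) := by rw [pow_add]; ring
    rw [this]; linarith [h1, h2]
  have hS : ((balancing (n2+d) : ℤ):ℝ) + ((balancing n2 : ℤ):ℝ)
      = 2^a1 + 2^a2 + 2^a3 := by
    have : ((balancing (n2+d) + balancing n2 : ℤ) : ℝ) = ((2^a1 + 2^a2 + 2^a3 : ℤ) : ℝ) := by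
      rw [heq]
    push_cast at this
    linarith [this]
  have h2a1pos : (0:ℝ) < 2^a1 := by positivity
  have hE : α^n2 * ((2:ℝ)^a1)⁻¹ * ((1+α^d)/(4*s)) - 1
      = 2^a2/2^a1 + 2^a3/2^a1 + (β^n2 + β^(n2+d))/(4*s*2^a1) := by
    rw [show α^n2 * ((2:ℝ)^a1)⁻¹ * ((1+α^d)/(4*s))
        = (α^n2 * (1+α^d))/(4*s*2^a1) by ring, key, hS]
    field_simp
    ring
  rw [hE]
  have hnn : (0:ℝ) ≤ 2^a2/2^a1 + 2^a3/2^a1 + (β^n2 + β^(n2+d))/(4*s*2^a1) := by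
    have : (0:ℝ) ≤ β^n2 + β^(n2+d) := by positivity
    have h4 : (0:ℝ) < 4*s*2^a1 := by positivity
    positivity
  rw [abs_of_nonneg hnn]
  -- main bound
  have hb1 : β^n2 ≤ 1 := pow_le_one₀ hβpos.le hβle1
  have hb2 : β^(n2+d) ≤ β^2 := pow_le_pow_of_le_one hβpos.le hβle1 (by omega)
  have hb3 : β^2 ≤ 3/100 := by nlinarith
  have hfrac : (β^n2 + β^(n2+d))/(4*s) ≤ (103/100)/(5656/1000) := by
    apply div_le_div₀ (by norm_num) (by linarith) (by norm_num) (by nlinarith)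
  have h2a2 : (1:ℝ) ≤ 2^a2 := one_le_pow₀ (by norm_num)
  have h2a3 : (2:ℝ)^a3 ≤ 2^a2 := pow_le_pow_right₀ (by norm_num) ha23
  have hmain : 2^a2 + 2^a3 + (β^n2 + β^(n2+d))/(4*s) < 2.2 * 2^a2 := by
    have h19 : ((103:ℝ)/100)/(5656/1000) < 19/100 := by norm_num
    have h22 : (2.2:ℝ) = 22/10 := by norm_num
    rw [h22]
    linarith
  have hrew : 2^a2/2^a1 + 2^a3/2^a1 + (β^n2 + β^(n2+d))/(4*s*2^a1)
      = (2^a2 + 2^a3 + (β^n2 + β^(n2+d))/(4*s)) / 2^a1 := by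
    rw [← div_div, ← add_div, ← add_div]
  rw [hrew, show (2.2:ℝ) * (2^a2 / 2^a1) = (2.2 * 2^a2) / 2^a1 by ring]
  gcongr
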